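/- Let b : ℝᵈ → ℝ be defined by b(x) = 1 if ‖x‖ ≤ 1 and b(x) = ‖x‖^{−d−1} if ‖x‖ > 1, and for m ≥ 0 set b_m(x) = 2^{dm} b(2^m x). Then there exists a constant C > 0 (depending only on d) such that for all n, m ≥ 0 and all x ∈ ℝᵈ: (b_n ∗ b_m)(x) ≤ C · b_{min{n,m}}(x). -/
import Mathlib


open MeasureTheory

/-- The function `b(x) = 1` for `‖x‖ ≤ 1` and `b(x) = ‖x‖^{−d−1}` for `‖x‖ > 1`. -/
noncomputable def bfun (d : ℕ) (x : EuclideanSpace ℝ (Fin d)) : ℝ :=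
  if ‖x‖ ≤ 1 then 1 else ‖x‖ ^ (-(d : ℝ) - 1)

/-- The rescaled function `b_m(x) = 2^{dm} b(2^m x)`. -/
noncomputable def bfunm (d : ℕ) (m : ℕ) (x : EuclideanSpace ℝ (Fin d)) : ℝ :=
  (2 : ℝ) ^ (d * m) * bfun d ((2 : ℝ) ^ m • x)

lemma bfun_pos (d : ℕ) (x : EuclideanSpace ℝ (Fin d)) : 0 < bfun d x := by
  unfold bfun
  split_ifs with h
  · norm_num
  · exact Real.rpow_pos_of_pos (by push_neg at h; linarith) _

lemma bfun_nonneg (d : ℕ) (x : EuclideanSpace ℝ (Fin d)) : 0 ≤ bfun d x :=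
  (bfun_pos d x).le

lemma bfun_le_one (d : ℕ) (x : EuclideanSpace ℝ (Fin d)) : bfun d x ≤ 1 := by
  unfold bfun
  split_ifs with h
  · exact le_rfl
  · push_neg at h
    exact Real.rpow_le_one_of_one_le_of_nonpos h.le (by nlinarith [Nat.cast_nonneg (α := ℝ) d])

lemma bfun_le_rpow (d : ℕ) {x : EuclideanSpace ℝ (Fin d)} (hx : x ≠ 0) :
    bfun d x ≤ ‖x‖ ^ (-(d : ℝ) - 1) := by
  unfold bfun
  split_ifs with h
  · have hx0 : 0 < ‖x‖ := norm_pos_iff.mpr hx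
    exact Real.one_le_rpow_of_pos_of_le_one_of_nonpos hx0 h (by nlinarith [Nat.cast_nonneg (α := ℝ) d])
  · exact le_rfl

lemma bfun_eq (d : ℕ) {x : EuclideanSpace ℝ (Fin d)} (hx : 1 ≤ ‖x‖) :
    bfun d x = ‖x‖ ^ (-(d : ℝ) - 1) := by
  unfold bfun
  split_ifs with h
  · have : ‖x‖ = 1 := le_antisymm h hx
    rw [this, Real.one_rpow]
  · rfl

lemma bfun_ge (d : ℕ) {x : EuclideanSpace ℝ (Fin d)} (hx : ‖x‖ ≤ 2) :
    (2 : ℝ) ^ (-(d : ℝ) - 1) ≤ bfun d x := by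
  unfold bfun
  split_ifs with h
  · exact Real.rpow_le_one_of_one_le_of_nonpos (by norm_num) (by nlinarith [Nat.cast_nonneg (α := ℝ) d])
  · push_neg at h
    exact Real.rpow_le_rpow_of_nonpos (by linarith) hx (by nlinarith [Nat.cast_nonneg (α := ℝ) d])

lemma bfun_measurable (d : ℕ) : Measurable (bfun d) := by
  unfold bfun
  exact Measurable.ite (measurableSet_le measurable_norm measurable_const)
    measurable_const (measurable_norm.pow_const _)


lemma two_pow_pos' (m : ℕ) : (0:ℝ) < 2 ^ m := by positivity

lemma norm_two_pow_smul (d m : ℕ) (x : EuclideanSpace ℝ (Fin d)) :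
    ‖(2 : ℝ) ^ m • x‖ = 2 ^ m * ‖x‖ := by
  rw [norm_smul, Real.norm_eq_abs, abs_of_pos (two_pow_pos' m)]

lemma aux_pow (d m : ℕ) :
    (2:ℝ) ^ (d * m) * ((2:ℝ) ^ m) ^ (-(d:ℝ) - 1) = ((2:ℝ) ^ m)⁻¹ := by
  rw [mul_comm d m, pow_mul, ← Real.rpow_natCast ((2:ℝ) ^ m) d,
    ← Real.rpow_add (two_pow_pos' m)]
  have : (d : ℝ) + (-(d:ℝ) - 1) = -1 := by ring
  rw [this, Real.rpow_neg_one]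

lemma bfunm_nonneg (d m : ℕ) (x : EuclideanSpace ℝ (Fin d)) : 0 ≤ bfunm d m x :=
  mul_nonneg (by positivity) (bfun_nonneg d _)

lemma bfunm_le (d m : ℕ) (x : EuclideanSpace ℝ (Fin d)) : bfunm d m x ≤ 2 ^ (d * m) := by
  unfold bfunm
  nlinarith [bfun_le_one d ((2:ℝ) ^ m • x), pow_pos (show (0:ℝ) < 2 by norm_num) (d * m)]

lemma bfunm_le_rpow (d m : ℕ) {x : EuclideanSpace ℝ (Fin d)} (hx : x ≠ 0) :
    bfunm d m x ≤ ((2:ℝ) ^ m)⁻¹ * ‖x‖ ^ (-(d:ℝ) - 1) := by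
  unfold bfunm
  have h1 : bfun d ((2:ℝ) ^ m • x) ≤ ‖(2:ℝ) ^ m • x‖ ^ (-(d:ℝ) - 1) :=
    bfun_le_rpow d (smul_ne_zero (by positivity) hx)
  have h2 : ‖(2:ℝ) ^ m • x‖ ^ (-(d:ℝ) - 1)
      = ((2:ℝ) ^ m) ^ (-(d:ℝ) - 1) * ‖x‖ ^ (-(d:ℝ) - 1) := by
    rw [norm_two_pow_smul, Real.mul_rpow (two_pow_pos' m).le (norm_nonneg x)]
  calc (2:ℝ) ^ (d * m) * bfun d ((2:ℝ) ^ m • x)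
      ≤ (2:ℝ) ^ (d * m) * (((2:ℝ) ^ m) ^ (-(d:ℝ) - 1) * ‖x‖ ^ (-(d:ℝ) - 1)) := by
        rw [h2] at h1
        exact mul_le_mul_of_nonneg_left h1 (by positivity)
    _ = ((2:ℝ) ^ m)⁻¹ * ‖x‖ ^ (-(d:ℝ) - 1) := by rw [← mul_assoc, aux_pow]

lemma bfunm_eq (d m : ℕ) {x : EuclideanSpace ℝ (Fin d)} (hx : 1 ≤ (2:ℝ) ^ m * ‖x‖) :
    bfunm d m x = ((2:ℝ) ^ m)⁻¹ * ‖x‖ ^ (-(d:ℝ) - 1) := by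
  unfold bfunm
  rw [bfun_eq d (by rw [norm_two_pow_smul]; exact hx), norm_two_pow_smul,
    Real.mul_rpow (two_pow_pos' m).le (norm_nonneg x), ← mul_assoc, aux_pow]

lemma bfunm_ge (d m : ℕ) {x : EuclideanSpace ℝ (Fin d)} (hx : ‖x‖ ≤ 2 * ((2:ℝ) ^ m)⁻¹) :
    (2:ℝ) ^ (d * m) * (2:ℝ) ^ (-(d:ℝ) - 1) ≤ bfunm d m x := by
  unfold bfunm
  have h1 : ‖(2:ℝ) ^ m • x‖ ≤ 2 := by
    rw [norm_two_pow_smul]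
    calc (2:ℝ) ^ m * ‖x‖ ≤ (2:ℝ) ^ m * (2 * ((2:ℝ) ^ m)⁻¹) :=
          mul_le_mul_of_nonneg_left hx (two_pow_pos' m).le
      _ = 2 := by field_simp
  exact mul_le_mul_of_nonneg_left (bfun_ge d h1) (by positivity)

lemma bfunm_measurable (d m : ℕ) : Measurable (bfunm d m) :=
  ((bfun_measurable d).comp (measurable_const_smul _)).const_mul _

lemma pow_rpow_cancel (d : ℕ) : (2:ℝ) ^ (d + 1) * (2:ℝ) ^ (-(d:ℝ) - 1) = 1 := by
  rw [← Real.rpow_natCast 2 (d + 1), ← Real.rpow_add (by norm_num : (0:ℝ) < 2)]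
  have : ((d + 1 : ℕ) : ℝ) + (-(d:ℝ) - 1) = 0 := by push_cast; ring
  rw [this, Real.rpow_zero]


lemma key_pointwise (d : ℕ) {m n : ℕ} (hmn : m ≤ n) (x y : EuclideanSpace ℝ (Fin d)) :
    bfunm d n y * bfunm d m (x - y) ≤
      (2:ℝ) ^ (d + 1) * bfunm d m x * (bfunm d n y + bfunm d m (x - y)) := by
  set A := bfunm d m x with hA
  set B := bfunm d n y with hB
  set Cc := bfunm d m (x - y) with hCc
  have hA0 : 0 ≤ A := bfunm_nonneg d m x
  have hB0 : 0 ≤ B := bfunm_nonneg d n y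
  have hC0 : 0 ≤ Cc := bfunm_nonneg d m (x - y)
  by_cases hcase : ‖x‖ ≤ 2 * ((2:ℝ) ^ m)⁻¹
  · -- small x : A ≥ 2^{dm} 2^{-(d+1)} and Cc ≤ 2^{dm}
    have h1 := bfunm_ge d m hcase
    have h2 : Cc ≤ 2 ^ (d * m) := bfunm_le d m (x - y)
    have h3 : Cc ≤ (2:ℝ) ^ (d + 1) * A := by
      calc Cc ≤ 2 ^ (d * m) := h2
        _ = (2:ℝ) ^ (d + 1) * ((2:ℝ) ^ (d * m) * (2:ℝ) ^ (-(d:ℝ) - 1)) := by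
            rw [show (2:ℝ) ^ (d + 1) * ((2:ℝ) ^ (d * m) * (2:ℝ) ^ (-(d:ℝ) - 1))
              = (2:ℝ) ^ (d * m) * ((2:ℝ) ^ (d + 1) * (2:ℝ) ^ (-(d:ℝ) - 1)) by ring,
              pow_rpow_cancel, mul_one]
        _ ≤ (2:ℝ) ^ (d + 1) * A := mul_le_mul_of_nonneg_left h1 (by positivity)
    nlinarith
  · push_neg at hcase
    have hxpos : 0 < ‖x‖ := lt_trans (by positivity) hcase
    have hexp : (-(d:ℝ) - 1) ≤ 0 := by nlinarith [Nat.cast_nonneg (α := ℝ) d]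
    have hAx : A = ((2:ℝ) ^ m)⁻¹ * ‖x‖ ^ (-(d:ℝ) - 1) := by
      apply bfunm_eq
      have : (2:ℝ) ^ m * (2 * ((2:ℝ) ^ m)⁻¹) ≤ (2:ℝ) ^ m * ‖x‖ :=
        mul_le_mul_of_nonneg_left hcase.le (two_pow_pos' m).le
      have h2 : (2:ℝ) ^ m * (2 * ((2:ℝ) ^ m)⁻¹) = 2 := by field_simp
      linarith [h2 ▸ this]
    have hhalf : (‖x‖ / 2) ^ (-(d:ℝ) - 1) = (2:ℝ) ^ (d + 1) * ‖x‖ ^ (-(d:ℝ) - 1) := by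
      rw [Real.div_rpow (norm_nonneg x) (by norm_num : (0:ℝ) ≤ 2)]
      rw [div_eq_iff (by positivity : ((2:ℝ) ^ (-(d:ℝ) - 1) : ℝ) ≠ 0)]
      rw [show (2:ℝ) ^ (d + 1) * ‖x‖ ^ (-(d:ℝ) - 1) * (2:ℝ) ^ (-(d:ℝ) - 1)
        = ‖x‖ ^ (-(d:ℝ) - 1) * ((2:ℝ) ^ (d + 1) * (2:ℝ) ^ (-(d:ℝ) - 1)) by ring,
        pow_rpow_cancel, mul_one]
    -- general bound on points with norm ≥ ‖x‖/2
    have hgen : ∀ (k : ℕ) (z : EuclideanSpace ℝ (Fin d)), ‖x‖ / 2 ≤ ‖z‖ →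
        bfunm d k z ≤ (2:ℝ) ^ (d + 1) * (((2:ℝ) ^ k)⁻¹ * ‖x‖ ^ (-(d:ℝ) - 1)) := by
      intro k z hz
      have hz0 : z ≠ 0 := by
        intro h; rw [h, norm_zero] at hz; linarith [half_pos hxpos]
      calc bfunm d k z ≤ ((2:ℝ) ^ k)⁻¹ * ‖z‖ ^ (-(d:ℝ) - 1) := bfunm_le_rpow d k hz0
        _ ≤ ((2:ℝ) ^ k)⁻¹ * (‖x‖ / 2) ^ (-(d:ℝ) - 1) :=
            mul_le_mul_of_nonneg_left
              (Real.rpow_le_rpow_of_nonpos (half_pos hxpos) hz hexp) (by positivity)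
        _ = (2:ℝ) ^ (d + 1) * (((2:ℝ) ^ k)⁻¹ * ‖x‖ ^ (-(d:ℝ) - 1)) := by
            rw [hhalf]; ring
    have htri : ‖x‖ ≤ ‖y‖ + ‖x - y‖ := by
      calc ‖x‖ = ‖y + (x - y)‖ := by rw [add_sub_cancel]
        _ ≤ ‖y‖ + ‖x - y‖ := norm_add_le _ _
    rcases le_or_gt (‖x‖ / 2) ‖x - y‖ with hsub | hsub
    · -- bound Cc
      have h4 : Cc ≤ (2:ℝ) ^ (d + 1) * A := by
        rw [hAx]; exact hgen m (x - y) hsub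
      nlinarith
    · -- then ‖y‖ ≥ ‖x‖/2
      have hy : ‖x‖ / 2 ≤ ‖y‖ := by linarith
      have h4 : B ≤ (2:ℝ) ^ (d + 1) * A := by
        rw [hAx]
        refine (hgen n y hy).trans ?_
        have hmono : ((2:ℝ) ^ n)⁻¹ ≤ ((2:ℝ) ^ m)⁻¹ :=
          inv_anti₀ (two_pow_pos' m) (pow_le_pow_right₀ (by norm_num) hmn)
        have := mul_le_mul_of_nonneg_right hmono
          (Real.rpow_nonneg (norm_nonneg x) (-(d:ℝ) - 1))
        exact mul_le_mul_of_nonneg_left this (by positivity)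
      nlinarith

open FiniteDimensional in
lemma bfun_integrable (d : ℕ) : Integrable (bfun d) := by
  have h : (Module.finrank ℝ (EuclideanSpace ℝ (Fin d)) : ℝ) < (d:ℝ) + 1 := by
    rw [finrank_euclideanSpace_fin]; linarith
  have hbound : ∀ x : EuclideanSpace ℝ (Fin d),
      bfun d x ≤ (2:ℝ) ^ (d + 1) * (1 + ‖x‖) ^ (-(d:ℝ) - 1) := by
    intro x
    have hexp : (-(d:ℝ) - 1) ≤ 0 := by nlinarith [Nat.cast_nonneg (α := ℝ) d]
    by_cases hx : ‖x‖ ≤ 1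
    · have h1 : (2:ℝ) ^ (-(d:ℝ) - 1) ≤ (1 + ‖x‖) ^ (-(d:ℝ) - 1) :=
        Real.rpow_le_rpow_of_nonpos (by positivity) (by linarith) hexp
      have h2 := mul_le_mul_of_nonneg_left h1
        (by positivity : (0:ℝ) ≤ (2:ℝ) ^ (d + 1))
      rw [pow_rpow_cancel d] at h2
      calc bfun d x ≤ 1 := bfun_le_one d x
        _ ≤ _ := h2
    · push_neg at hx
      have hx0 : (0:ℝ) < ‖x‖ := by linarith
      have h1 : (2 * ‖x‖) ^ (-(d:ℝ) - 1) ≤ (1 + ‖x‖) ^ (-(d:ℝ) - 1) :=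
        Real.rpow_le_rpow_of_nonpos (by positivity) (by linarith) hexp
      rw [Real.mul_rpow (by norm_num) hx0.le] at h1
      have h2 := mul_le_mul_of_nonneg_left h1
        (by positivity : (0:ℝ) ≤ (2:ℝ) ^ (d + 1))
      rw [← mul_assoc, pow_rpow_cancel d, one_mul] at h2
      calc bfun d x ≤ ‖x‖ ^ (-(d:ℝ) - 1) := by
            rw [bfun_eq d hx.le]
        _ ≤ _ := h2
  refine ((integrable_one_add_norm (E := EuclideanSpace ℝ (Fin d)) h).const_mul
    ((2:ℝ) ^ (d + 1))).mono' (bfun_measurable d).aestronglyMeasurable ?_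
  filter_upwards with x
  rw [Real.norm_eq_abs, abs_of_nonneg (bfun_nonneg d x)]
  have : -((d:ℝ) + 1) = -(d:ℝ) - 1 := by ring
  rw [this]
  exact hbound x

lemma bfunm_integrable (d m : ℕ) : Integrable (bfunm d m) := by
  unfold bfunm
  exact ((integrable_comp_smul_iff volume (bfun d)
    (pow_ne_zero m (two_ne_zero))).2 (bfun_integrable d)).const_mul _

open FiniteDimensional in
lemma integral_bfunm (d m : ℕ) : ∫ y, bfunm d m y = ∫ y, bfun d y := by
  unfold bfunm
  rw [integral_const_mul _ _, Measure.integral_comp_smul (μ := volume) (bfun d) ((2:ℝ) ^ m),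
    smul_eq_mul, ← mul_assoc]
  have h1 : |(((2:ℝ) ^ m) ^ Module.finrank ℝ (EuclideanSpace ℝ (Fin d)))⁻¹|
      = ((2:ℝ) ^ (d * m))⁻¹ := by
    rw [finrank_euclideanSpace_fin, ← pow_mul, mul_comm m d, abs_of_pos (by positivity)]
  rw [h1, mul_inv_cancel₀ (by positivity), one_mul]

lemma integral_bfun_pos (d : ℕ) : 0 < ∫ y, bfun d y := by
  rw [integral_pos_iff_support_of_nonneg (fun x => bfun_nonneg d x) (bfun_integrable d)]
  have h : Function.support (bfun d) = Set.univ :=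
    Set.eq_univ_of_forall (fun x => (bfun_pos d x).ne')
  rw [h]
  exact isOpen_univ.measure_pos volume Set.univ_nonempty

lemma main_bound (d : ℕ) {m n : ℕ} (hmn : m ≤ n) (x : EuclideanSpace ℝ (Fin d)) :
    (∫ y, bfunm d n y * bfunm d m (x - y)) ≤
      (2:ℝ) ^ (d + 2) * (∫ y, bfun d y) * bfunm d m x := by
  have hIn := bfunm_integrable d n
  have hImx : Integrable (fun y => bfunm d m (x - y)) :=
    (bfunm_integrable d m).comp_sub_left x
  have hg : Integrable
      (fun y => (2:ℝ) ^ (d + 1) * bfunm d m x * (bfunm d n y + bfunm d m (x - y))) :=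
    (hIn.add hImx).const_mul _
  have hf : Integrable (fun y => bfunm d n y * bfunm d m (x - y)) := by
    refine hg.mono' ?_ ?_
    · exact ((bfunm_measurable d n).mul ((bfunm_measurable d m).comp
        (measurable_const.sub measurable_id))).aestronglyMeasurable
    · filter_upwards with y
      rw [Real.norm_eq_abs, abs_of_nonneg
        (mul_nonneg (bfunm_nonneg _ _ _) (bfunm_nonneg _ _ _))]
      exact key_pointwise d hmn x y
  calc (∫ y, bfunm d n y * bfunm d m (x - y))
      ≤ ∫ y, (2:ℝ) ^ (d + 1) * bfunm d m x * (bfunm d n y + bfunm d m (x - y)) :=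
        integral_mono hf hg (fun y => key_pointwise d hmn x y)
    _ = (2:ℝ) ^ (d + 1) * bfunm d m x * ((∫ y, bfunm d n y) + ∫ y, bfunm d m (x - y)) := by
        rw [integral_const_mul _ _, integral_add hIn hImx]
    _ = (2:ℝ) ^ (d + 2) * (∫ y, bfun d y) * bfunm d m x := by
        rw [integral_sub_left_eq_self (bfunm d m) volume x, integral_bfunm, integral_bfunm,
          show (2:ℝ) ^ (d + 2) = (2:ℝ) ^ (d + 1) * 2 from pow_succ 2 (d + 1)]
        ring

theorem stmt6 (d : ℕ) (hd : 0 < d) :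
    ∃ C > 0, ∀ n m : ℕ, ∀ x : EuclideanSpace ℝ (Fin d),
      (∫ y, bfunm d n y * bfunm d m (x - y)) ≤ C * bfunm d (min n m) x := by
  refine ⟨(2:ℝ) ^ (d + 2) * ∫ y, bfun d y, mul_pos (by positivity) (integral_bfun_pos d), ?_⟩
  intro n m x
  rcases le_total m n with h | h
  · rw [min_eq_right h]
    exact main_bound d h x
  · rw [min_eq_left h]
    have hswap : (∫ y, bfunm d n y * bfunm d m (x - y))
        = ∫ y, bfunm d m y * bfunm d n (x - y) := by
      rw [← integral_sub_left_eq_self (fun y => bfunm d n y * bfunm d m (x - y)) volume x]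
      refine integral_congr_ae (Filter.Eventually.of_forall fun y => ?_)
      simp only [sub_sub_cancel]
      ring
    rw [hswap]
    exact main_bound d h x
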